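/- There is no C² map f : U → ℝⁿ defined on a nonempty open set U ⊆ ℝⁿ such that for all distinct u, v ∈ U, the tangent affine subspaces to the graph of f at (u, f(u)) and (v, f(v)) are disjoint in ℝ^(2n). Equivalently: for any C² map f : U → ℝⁿ with U nonempty open, there exist distinct u, v ∈ U such that Df(u)·u - f(u) - (Df(v)·v - f(v)) lies in the image of Df(u) - Df(v). -/

import Mathlib

open Module Function Set Filter Topology

section Aux

variable {E : Type*} [NormedAddCommGroup E] [NormedSpace ℝ E] [FiniteDimensional ℝ E]

lemma isUnit_clm_of_bijective {M : E →L[ℝ] E} (h : Function.Bijective M) : IsUnit M := by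
  let e0 : E ≃ₗ[ℝ] E := LinearEquiv.ofBijective (M : E →ₗ[ℝ] E) h
  let e : E ≃L[ℝ] E := e0.toContinuousLinearEquiv
  have he : ∀ x, e x = M x := fun x => congrFun (LinearEquiv.coe_toContinuousLinearEquiv' e0) x
  refine ⟨⟨M, (e.symm : E →L[ℝ] E), ?_, ?_⟩, rfl⟩
  · ext x
    rw [ContinuousLinearMap.mul_apply, ContinuousLinearMap.one_apply,
      ContinuousLinearEquiv.coe_coe, ← he (e.symm x)]
    exact e.apply_symm_apply x
  · ext x
    rw [ContinuousLinearMap.mul_apply, ContinuousLinearMap.one_apply,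
      ContinuousLinearEquiv.coe_coe, ← he x]
    exact e.symm_apply_apply x

lemma bijective_of_isUnit {M : E →L[ℝ] E} (h : IsUnit M) : Function.Bijective M := by
  obtain ⟨u, rfl⟩ := h
  constructor
  · intro x y hxy
    have h1 : ∀ z, (↑u⁻¹ : E →L[ℝ] E) ((u : E →L[ℝ] E) z) = z := by
      intro z
      have h2 : ((↑u⁻¹ * ↑u : E →L[ℝ] E)) z = (1 : E →L[ℝ] E) z := by rw [u.inv_mul]
      rwa [ContinuousLinearMap.mul_apply, ContinuousLinearMap.one_apply] at h2
    rw [← h1 x, ← h1 y, hxy]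
  · intro y
    refine ⟨(↑u⁻¹ : E →L[ℝ] E) y, ?_⟩
    have h2 : ((↑u * ↑u⁻¹ : E →L[ℝ] E)) y = (1 : E →L[ℝ] E) y := by rw [u.mul_inv]
    rwa [ContinuousLinearMap.mul_apply, ContinuousLinearMap.one_apply] at h2

set_option maxHeartbeats 1000000 in
/-- A C¹ map on an open set, all of whose derivatives are singular, is not injective
(constant-rank-theorem style argument). -/
theorem exists_eq_of_fderiv_singular {g : E → E} {V : Set E} (hV : IsOpen V)
    {c₀ : E} (hc₀ : c₀ ∈ V) (hg : ContDiffOn ℝ 1 g V)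
    (hsing : ∀ u ∈ V, ¬ Function.Bijective (fderiv ℝ g u)) :
    ∃ a ∈ V, ∃ b ∈ V, a ≠ b ∧ g a = g b := by
  classical
  rcases subsingleton_or_nontrivial E with hE | hE
  · exact absurd ⟨fun x y _ => Subsingleton.elim x y, fun y => ⟨y, Subsingleton.elim _ _⟩⟩
      (hsing c₀ hc₀)
  set D : E → E →L[ℝ] E := fun u => fderiv ℝ g u with hDdef
  have hDc : ContinuousOn D V := by
    have h0 : ContDiffOn ℝ 0 (fderiv ℝ g) V := hg.fderiv_of_isOpen hV (by norm_num)
    exact contDiffOn_zero.mp h0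
  have hdiff : ∀ u ∈ V, HasFDerivAt g (D u) u := fun u hu =>
    ((hg.contDiffAt (hV.mem_nhds hu)).differentiableAt one_ne_zero).hasFDerivAt
  set rk : E → ℕ := fun u => finrank ℝ (LinearMap.range ((D u) : E →ₗ[ℝ] E)) with hrkdef
  have hbdd : BddAbove (rk '' V) := by
    refine ⟨finrank ℝ E, ?_⟩
    rintro k ⟨u, hu, rfl⟩
    exact Submodule.finrank_le _
  set r := sSup (rk '' V) with hrdef
  obtain ⟨u₀, hu₀V, hu₀⟩ : ∃ u₀ ∈ V, rk u₀ = r := by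
    obtain ⟨u₀, hu₀, h⟩ := Nat.sSup_mem ⟨rk c₀, mem_image_of_mem _ hc₀⟩ hbdd
    exact ⟨u₀, hu₀, h⟩
  have hle : ∀ u ∈ V, rk u ≤ r := fun u hu => le_csSup hbdd (mem_image_of_mem _ hu)
  have hrange_ne : ∀ u ∈ V, LinearMap.range ((D u) : E →ₗ[ℝ] E) ≠ ⊤ := by
    intro u hu htop
    have hsurj : Function.Surjective (D u) := LinearMap.range_eq_top.mp htop
    exact hsing u hu ⟨LinearMap.injective_iff_surjective.mpr hsurj, hsurj⟩
  have hrlt : r < finrank ℝ E := by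
    rw [← hu₀]
    exact Submodule.finrank_lt (hrange_ne u₀ hu₀V)
  rcases Nat.eq_zero_or_pos r with hr0 | hrpos
  · -- rank zero everywhere: g locally constant
    have hzero : ∀ u ∈ V, D u = 0 := by
      intro u hu
      have h1 : rk u = 0 := le_antisymm (hr0 ▸ hle u hu) (Nat.zero_le _)
      have h2 : LinearMap.range ((D u) : E →ₗ[ℝ] E) = ⊥ := Submodule.finrank_eq_zero.mp h1
      have h3 : ((D u) : E →ₗ[ℝ] E) = 0 := LinearMap.range_eq_bot.mp h2
      ext x
      exact congrArg (fun (N : E →ₗ[ℝ] E) => N x) h3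
    obtain ⟨ε, hε, hball⟩ := Metric.isOpen_iff.mp hV u₀ hu₀V
    obtain ⟨e, he⟩ := exists_ne (0 : E)
    have hen : (0:ℝ) < ‖e‖ := norm_pos_iff.mpr he
    set a : E := u₀ + (ε / (2 * ‖e‖)) • e with hadef
    have hane : a ≠ u₀ := by
      rw [hadef]
      intro hcon
      have h4 : (ε / (2 * ‖e‖)) • e = 0 := by
        have := sub_eq_zero.mpr hcon
        simpa [add_sub_cancel_left] using this
      rcases smul_eq_zero.mp h4 with h | h
      · have : ε / (2 * ‖e‖) > 0 := by positivity
        linarith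
      · exact he h
    have haV : a ∈ Metric.ball u₀ ε := by
      have hne' : ‖e‖ ≠ 0 := ne_of_gt hen
      have hnorm : ‖(ε / (2 * ‖e‖)) • e‖ = ε / 2 := by
        rw [norm_smul, Real.norm_eq_abs,
          abs_of_pos (show (0:ℝ) < ε / (2 * ‖e‖) by positivity)]
        field_simp
      rw [hadef, Metric.mem_ball, dist_eq_norm, add_sub_cancel_left, hnorm]
      linarith
    have hconst : g a = g u₀ := by
      have hb := Convex.norm_image_sub_le_of_norm_hasFDerivWithin_le
        (f := g) (f' := fun _ => (0 : E →L[ℝ] E)) (C := 0) (s := Metric.ball u₀ ε)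
        (fun x hx => by
          have h5 := (hdiff x (hball hx)).hasFDerivWithinAt (s := Metric.ball u₀ ε)
          rwa [hzero x (hball hx)] at h5)
        (fun x _ => by simp) (convex_ball u₀ ε) (Metric.mem_ball_self hε) haV
      have h0 : ‖g a - g u₀‖ ≤ 0 := by simpa using hb
      exact sub_eq_zero.mp (norm_le_zero_iff.mp h0)
    exact ⟨a, hball haV, u₀, hu₀V, hane, hconst⟩
  · -- positive maximal rank r < n
    set T : E →ₗ[ℝ] E := ((D u₀) : E →ₗ[ℝ] E) with hTdef
    set Kt := LinearMap.ker T with hKtdef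
    set Im := LinearMap.range T with hImdef
    have hImr : finrank ℝ Im = r := hu₀
    obtain ⟨Cc, hCc⟩ := Submodule.exists_isCompl Kt
    obtain ⟨F', hF'⟩ := Submodule.exists_isCompl Im
    set P : E →ₗ[ℝ] E := Im.subtype ∘ₗ (Im.linearProjOfIsCompl F' hF') with hPdef
    have hPmem : ∀ x, P x ∈ Im := fun x => ((Im.linearProjOfIsCompl F' hF') x).2
    have hPIm : ∀ x, x ∈ Im → P x = x := by
      intro x hx
      have := Submodule.linearProjOfIsCompl_apply_left hF' ⟨x, hx⟩
      simp only [hPdef, LinearMap.comp_apply]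
      erw [this]
      rfl
    have hPF' : ∀ x, x ∈ F' → P x = 0 := by
      intro x hx
      have := Submodule.linearProjOfIsCompl_apply_right hF' ⟨x, hx⟩
      simp only [hPdef, LinearMap.comp_apply]
      erw [this]
      simp
    set PK : E →ₗ[ℝ] Kt := Kt.linearProjOfIsCompl Cc hCc with hPKdef
    have hdsum : finrank ℝ Im + finrank ℝ Kt = finrank ℝ E :=
      LinearMap.finrank_range_add_finrank_ker T
    have hdF : finrank ℝ Im + finrank ℝ F' = finrank ℝ E :=
      Submodule.finrank_add_eq_of_isCompl hF'
    have hKF : finrank ℝ Kt = finrank ℝ F' := by omega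
    obtain ⟨j₀⟩ := FiniteDimensional.nonempty_linearEquiv_of_finrank_eq hKF
    set J : E →ₗ[ℝ] E := F'.subtype ∘ₗ (j₀ : Kt →ₗ[ℝ] F') ∘ₗ PK with hJdef
    have hJF' : ∀ x, J x ∈ F' := fun x => (j₀ (PK x)).2
    have hJK : ∀ x : Kt, J (x : E) = (j₀ x : E) := by
      intro x
      simp only [hJdef, LinearMap.comp_apply, hPKdef]
      erw [Submodule.linearProjOfIsCompl_apply_left hCc x]
      rfl
    set Pc : E →L[ℝ] E := LinearMap.toContinuousLinearMap P with hPcdef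
    set Jc : E →L[ℝ] E := LinearMap.toContinuousLinearMap J with hJcdef
    have hPc : ∀ x, Pc x = P x := fun x => congrFun (LinearMap.coe_toContinuousLinearMap' P) x
    have hJc : ∀ x, Jc x = J x := fun x => congrFun (LinearMap.coe_toContinuousLinearMap' J) x
    set χ : (E →L[ℝ] E) → (E →L[ℝ] E) := fun M => Pc.comp M + Jc with hχdef
    have hχapp : ∀ M : E →L[ℝ] E, ∀ x, χ M x = P (M x) + J x := by
      intro M x
      simp only [hχdef, ContinuousLinearMap.add_apply, ContinuousLinearMap.comp_apply, hPc, hJc]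
    have hkey : ∀ y : E, P (T y) + J y = 0 → y = 0 := by
      intro y hy
      have h1 : P (T y) = - J y := eq_neg_of_add_eq_zero_left hy
      have h2 : P (T y) ∈ Im ⊓ F' := ⟨hPmem _, by rw [h1]; exact F'.neg_mem (hJF' y)⟩
      rw [hF'.inf_eq_bot] at h2
      have h3 : P (T y) = 0 := h2
      have h4 : J y = 0 := by
        have := h1.symm.trans h3
        simpa using this
      have h5 : T y = 0 := by
        have h6 := hPIm (T y) (LinearMap.mem_range_self T y)
        rw [h3] at h6
        exact h6.symm
      have h6 : y ∈ Kt := LinearMap.mem_ker.mpr h5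
      have h7 : J y = (j₀ ⟨y, h6⟩ : E) := hJK ⟨y, h6⟩
      rw [h7] at h4
      have h8 : j₀ ⟨y, h6⟩ = 0 := Submodule.coe_eq_zero.mp h4
      have h9 : (⟨y, h6⟩ : Kt) = 0 := by
        have := j₀.injective (a₁ := ⟨y, h6⟩) (a₂ := 0) (by simp [h8])
        exact this
      simpa using congrArg Subtype.val h9
    have hχinj : Function.Injective (χ (D u₀)) := by
      intro x y hxy
      have h0 : χ (D u₀) (x - y) = 0 := by rw [map_sub, hxy, sub_self]
      rw [hχapp] at h0
      have h1 : P (T (x - y)) + J (x - y) = 0 := h0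
      exact sub_eq_zero.mp (hkey _ h1)
    have hχbij : Function.Bijective (χ (D u₀)) := by
      refine ⟨hχinj, ?_⟩
      have h1 : Function.Injective ((χ (D u₀)) : E →ₗ[ℝ] E) := hχinj
      exact LinearMap.injective_iff_surjective.mp h1
    have hunit₀ : IsUnit (χ (D u₀)) := isUnit_clm_of_bijective hχbij
    set V' := {u | u ∈ V ∧ IsUnit (χ (D u))} with hV'def
    have hV'open : IsOpen V' := by
      have hcont : ContinuousOn (fun u => χ (D u)) V := by
        apply ContinuousOn.add ?_ continuousOn_const
        exact (ContinuousLinearMap.compL ℝ E E E Pc).continuous.comp_continuousOn hDc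
      have heq : V' = V ∩ (fun u => χ (D u)) ⁻¹' {M | IsUnit M} := by
        ext u; exact Iff.rfl
      rw [heq]
      exact hcont.isOpen_inter_preimage hV Units.isOpen
    have hu₀V' : u₀ ∈ V' := ⟨hu₀V, hunit₀⟩
    -- kernel property near the max-rank point
    have hker : ∀ u ∈ V', ∀ y : E, P (D u y) = 0 → D u y = 0 := by
      intro u hu y hy
      set M : E →ₗ[ℝ] E := ((D u) : E →ₗ[ℝ] E) with hMdef
      set N : E →ₗ[ℝ] E := P ∘ₗ M with hNdef
      have hImle : Im ≤ LinearMap.range N := by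
        rintro z hz
        obtain ⟨x, hx⟩ := (bijective_of_isUnit hu.2).2 z
        refine ⟨x, ?_⟩
        rw [hχapp] at hx
        have h1 := congrArg P hx
        rw [map_add, hPIm (P ((D u) x)) (hPmem _), hPF' (J x) (hJF' x), add_zero,
          hPIm z hz] at h1
        show P ((D u) x) = z
        exact h1
      have hNle : finrank ℝ (LinearMap.range N) ≤ rk u := by
        rw [hNdef, LinearMap.range_comp]
        exact Submodule.finrank_map_le P _
      have hNge : r ≤ finrank ℝ (LinearMap.range N) := by
        rw [← hImr]; exact Submodule.finrank_mono hImle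
      have hrk_u : rk u ≤ r := hle u hu.1
      have hrngN : finrank ℝ (LinearMap.range N) = r := by omega
      have hrkM : rk u = r := by omega
      have hkerMN : LinearMap.ker M = LinearMap.ker N := by
        apply Submodule.eq_of_le_of_finrank_eq
        · intro x hx
          have hx0 : M x = 0 := hx
          show N x = 0
          rw [hNdef]
          simp [LinearMap.comp_apply, hx0]
        · have e1 := LinearMap.finrank_range_add_finrank_ker M
          have e2 := LinearMap.finrank_range_add_finrank_ker N
          have e3 : finrank ℝ (LinearMap.range M) = r := hrkM
          omega
      have hyN : y ∈ LinearMap.ker N := by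
        show P (M y) = 0
        exact hy
      have : y ∈ LinearMap.ker M := by rw [hkerMN]; exact hyN
      exact LinearMap.mem_ker.mp this
    -- local inverse of H at u₀
    have hgC : ContDiffAt ℝ 1 g u₀ := hg.contDiffAt (hV.mem_nhds hu₀V)
    set Hm : E → E := fun u => Pc (g u) + Jc u with hHmdef
    have hHC : ContDiffAt ℝ 1 Hm u₀ := by
      apply ContDiffAt.add
      · exact (Pc.contDiff.contDiffAt).comp u₀ hgC
      · exact Jc.contDiff.contDiffAt
    have hHd : HasFDerivAt Hm (χ (D u₀)) u₀ := by
      have h1 : HasFDerivAt (fun u => Pc (g u)) (Pc.comp (D u₀)) u₀ :=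
        Pc.hasFDerivAt.comp u₀ (hdiff u₀ hu₀V)
      have h2 : HasFDerivAt (fun u : E => Jc u) Jc u₀ := Jc.hasFDerivAt
      exact h1.add h2
    set Λe : E ≃L[ℝ] E :=
      (LinearEquiv.ofBijective ((χ (D u₀)) : E →ₗ[ℝ] E) hχbij).toContinuousLinearEquiv with hΛdef
    have hΛcoe : (Λe : E →L[ℝ] E) = χ (D u₀) := by
      ext x
      exact congrFun (LinearEquiv.coe_toContinuousLinearEquiv' _) x
    have hHd' : HasFDerivAt Hm (Λe : E →L[ℝ] E) u₀ := by rw [hΛcoe]; exact hHd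
    have hstrict : HasStrictFDerivAt Hm (Λe : E →L[ℝ] E) u₀ := hHC.hasStrictFDerivAt' hHd' one_ne_zero
    set ψ : E → E := hstrict.localInverse Hm Λe u₀ with hψdef
    have hψC : ContDiffAt ℝ 1 ψ (Hm u₀) := hHC.to_localInverse hHd' one_ne_zero
    -- a nonzero direction in the kernel
    have hKpos : 0 < finrank ℝ Kt := by omega
    have hKnt : Nontrivial Kt := finrank_pos_iff.mp hKpos
    obtain ⟨k, hk0⟩ := exists_ne (0 : Kt)
    set w : E := J (k : E) with hwdef
    have hwF' : w ∈ F' := hJF' _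
    have hw0 : w ≠ 0 := by
      rw [hwdef, hJK k]
      intro h
      apply hk0
      have h8 : j₀ k = 0 := Submodule.coe_eq_zero.mp h
      exact j₀.injective (by simp [h8])
    set l : ℝ → E := fun t => Hm u₀ + t • w with hldef
    have hlcont : Continuous l := continuous_const.add (continuous_id.smul continuous_const)
    have hl0 : l 0 = Hm u₀ := by simp [hldef]
    have hltend : Tendsto l (𝓝 0) (𝓝 (Hm u₀)) := by
      rw [← hl0]; exact hlcont.continuousAt
    set γ : ℝ → E := fun t => ψ (l t) with hγdef
    have hγ0 : γ 0 = u₀ := by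
      rw [hγdef]
      simp only [hl0]
      exact hstrict.localInverse_apply_image
    have hγcont : ContinuousAt γ 0 := by
      have h1 : ContinuousAt ψ (l 0) := by
        rw [hl0]; exact hstrict.localInverse_continuousAt
      exact h1.comp hlcont.continuousAt
    have E1 : ∀ᶠ t in 𝓝 (0:ℝ), Hm (γ t) = l t := hltend.eventually hstrict.eventually_right_inverse
    have E2 : ∀ᶠ t in 𝓝 (0:ℝ), γ t ∈ V' := by
      apply hγcont.eventually_mem
      rw [hγ0]
      exact hV'open.mem_nhds hu₀V'
    obtain ⟨O, hO, hOC⟩ := hψC.contDiffOn le_rfl (by norm_num)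
    have E3 : ∀ᶠ t in 𝓝 (0:ℝ), l t ∈ interior O := by
      apply hltend.eventually
      exact isOpen_interior.eventually_mem (mem_interior_iff_mem_nhds.mpr hO)
    have hψdiff : DifferentiableOn ℝ ψ O := hOC.differentiableOn one_ne_zero
    obtain ⟨ε, hε, hEv⟩ := Metric.eventually_nhds_iff.mp ((E1.and E2).and E3)
    have hstep : ∀ t : ℝ, dist t (0:ℝ) < ε → HasDerivAt (fun s => g (γ s)) 0 t := by
      intro t ht
      obtain ⟨⟨h1, h2⟩, h3⟩ := hEv ht
      have hψd : DifferentiableAt ℝ ψ (l t) :=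
        hψdiff.differentiableAt (mem_interior_iff_mem_nhds.mp h3)
      have hld : HasDerivAt l w t := by
        have h4 : HasDerivAt (fun s : ℝ => s • w) ((1:ℝ) • w) t := (hasDerivAt_id t).smul_const w
        have h5 := h4.const_add (Hm u₀)
        simpa [hldef, one_smul] using h5
      set dγ : E := fderiv ℝ ψ (l t) w with hdγdef
      have hγd : HasDerivAt γ dγ t := hψd.hasFDerivAt.comp_hasDerivAt t hld
      have hγV : γ t ∈ V := h2.1
      have hρd : HasDerivAt (fun s => g (γ s)) (D (γ t) dγ) t :=
        (hdiff (γ t) hγV).comp_hasDerivAt t hγd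
      have hHl : (fun s => Hm (γ s)) =ᶠ[𝓝 t] l := by
        have hballm : Metric.ball (0:ℝ) ε ∈ 𝓝 t :=
          Metric.isOpen_ball.mem_nhds (by simpa [Metric.mem_ball] using ht)
        filter_upwards [hballm] with s hs
        exact ((hEv (by simpa [Metric.mem_ball] using hs)).1).1
      have hHγd : HasDerivAt (fun s => Hm (γ s)) (Pc (D (γ t) dγ) + Jc dγ) t := by
        have hA : HasDerivAt (fun s => Pc (g (γ s))) (Pc (D (γ t) dγ)) t :=
          Pc.hasFDerivAt.comp_hasDerivAt t hρd
        have hB : HasDerivAt (fun s => Jc (γ s)) (Jc dγ) t :=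
          Jc.hasFDerivAt.comp_hasDerivAt t hγd
        exact hA.add hB
      have hld2 : HasDerivAt (fun s => Hm (γ s)) w t := hld.congr_of_eventuallyEq hHl
      have huniq : Pc (D (γ t) dγ) + Jc dγ = w := hHγd.unique hld2
      have hPeq : P (D (γ t) dγ) = 0 := by
        have h6 := congrArg P huniq
        rw [map_add, hPc, hJc] at h6
        rw [hPIm (P ((D (γ t)) dγ)) (hPmem _), hPF' (J dγ) (hJF' dγ), add_zero,
          hPF' w hwF'] at h6
        exact h6
      have h7 := hker (γ t) h2 dγ hPeq
      rwa [h7] at hρd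
    have hhalf : dist (ε/2) (0:ℝ) < ε := by
      rw [Real.dist_eq, sub_zero, abs_of_pos (show (0:ℝ) < ε / 2 by linarith)]
      linarith
    have hconst : g (γ (ε/2)) = g u₀ := by
      have hmem : ∀ x ∈ Metric.ball (0:ℝ) ε,
          HasDerivWithinAt (fun s => g (γ s)) ((fun _ => (0:E)) x) (Metric.ball (0:ℝ) ε) x := by
        intro x hx
        exact (hstep x (by simpa [Metric.mem_ball] using hx)).hasDerivWithinAt
      have hb := Convex.norm_image_sub_le_of_norm_hasDerivWithin_le (C := 0) hmem
        (fun x _ => by simp) (convex_ball 0 ε) (Metric.mem_ball_self hε)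
        (show (ε/2) ∈ Metric.ball (0:ℝ) ε by rw [Metric.mem_ball]; exact hhalf)
      have h0 : ‖g (γ (ε/2)) - g (γ 0)‖ ≤ 0 := by simpa using hb
      have := sub_eq_zero.mp (norm_le_zero_iff.mp h0)
      rwa [hγ0] at this
    have hne2 : γ (ε/2) ≠ u₀ := by
      intro hcontra
      have h1 : Hm (γ (ε/2)) = l (ε/2) := ((hEv hhalf).1).1
      rw [hcontra] at h1
      have h2 : (ε/2) • w = 0 := by
        have h5 : l (ε/2) = Hm u₀ := h1.symm
        have h4 : Hm u₀ + (ε/2) • w = Hm u₀ := by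
          have h6 : l (ε/2) = Hm u₀ + (ε/2) • w := by rw [hldef]
          rw [← h6, h5]
        have h7 := congrArg (fun z => z - Hm u₀) h4
        simpa using h7
      rcases smul_eq_zero.mp h2 with h | h
      · linarith
      · exact hw0 h
    have hγmemV : γ (ε/2) ∈ V := (((hEv hhalf).1).2).1
    exact ⟨γ (ε/2), hγmemV, u₀, hu₀V, hne2, hconst⟩

end Aux

set_option maxHeartbeats 1000000 in
/-- Theorem 1: no C²-smooth T-embedded n-disc in ℝ^(2n). For any C² map
`f : U → ℝⁿ` on a nonempty open `U ⊆ ℝⁿ` (n ≥ 1), there are distinct `u, v ∈ U`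
whose tangent affine subspaces to the graph intersect; equivalently,
`b(u) - b(v) ∈ Im (A(u) - A(v))` where `A = Df` and `b(u) = Df(u)·u - f(u)`. -/
theorem stmt_14 (n : ℕ) (hn : 1 ≤ n) (U : Set (Fin n → ℝ)) (hU : IsOpen U)
    (hne : U.Nonempty) (f : (Fin n → ℝ) → (Fin n → ℝ)) (hf : ContDiffOn ℝ 2 f U) :
    ∃ u ∈ U, ∃ v ∈ U, u ≠ v ∧
      ∃ x : Fin n → ℝ, (fderiv ℝ f u - fderiv ℝ f v) x =
        (fderiv ℝ f u u - f u) - (fderiv ℝ f v v - f v) := by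
  classical
  by_contra hcon
  push_neg at hcon
  have hnE : Nontrivial (Fin n → ℝ) := by
    refine ⟨0, (fun _ => 1), ?_⟩
    intro h
    have := congrFun h ⟨0, hn⟩
    norm_num at this
  set A : (Fin n → ℝ) → (Fin n → ℝ) →L[ℝ] (Fin n → ℝ) := fun u => fderiv ℝ f u with hAdef
  have hA : ContDiffOn ℝ 1 A U := hf.fderiv_of_isOpen hU (by norm_num)
  have hdf : ∀ u ∈ U, HasFDerivAt f (A u) u := fun u hu =>
    ((hf.contDiffAt (hU.mem_nhds hu)).differentiableAt two_ne_zero).hasFDerivAt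
  have hdA : ∀ u ∈ U, HasFDerivAt A (fderiv ℝ A u) u := fun u hu =>
    ((hA.contDiffAt (hU.mem_nhds hu)).differentiableAt one_ne_zero).hasFDerivAt
  have hsymm : ∀ u ∈ U, ∀ v w, fderiv ℝ A u v w = fderiv ℝ A u w v := by
    intro u hu v w
    refine second_derivative_symmetric_of_eventually (f := f) ?_ (hdA u hu) v w
    exact eventually_of_mem (hU.mem_nhds hu) (fun y hy => hdf y hy)
  by_cases hcaseA : ∃ u ∈ U, ∃ h, Function.Bijective (fderiv ℝ A u h)
  · -- second derivative invertible somewhere: use a difference quotient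
    obtain ⟨u, hu, h, hbij⟩ := hcaseA
    have hh0 : h ≠ 0 := by
      intro h0
      rw [h0] at hbij
      rw [map_zero] at hbij
      obtain ⟨e, he⟩ := exists_ne (0 : Fin n → ℝ)
      obtain ⟨x, hx⟩ := hbij.2 e
      exact he (by simpa using hx.symm)
    set c : ℝ → ((Fin n → ℝ) →L[ℝ] (Fin n → ℝ)) := fun t => A (u + t • h) with hcdef
    have hline : HasDerivAt (fun t : ℝ => u + t • h) h 0 := by
      have h4 : HasDerivAt (fun s : ℝ => s • h) ((1:ℝ) • h) 0 := (hasDerivAt_id 0).smul_const h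
      have h5 := h4.const_add u
      simpa [one_smul] using h5
    have hc : HasDerivAt c (fderiv ℝ A u h) 0 := by
      have h6 : HasFDerivAt A (fderiv ℝ A u) (u + (0:ℝ) • h) := by
        simpa using hdA u hu
      have := h6.comp_hasDerivAt 0 hline
      exact this
    have hslope := hasDerivAt_iff_tendsto_slope.mp hc
    have hunit : IsUnit (fderiv ℝ A u h) := isUnit_clm_of_bijective hbij
    have hev : ∀ᶠ t in 𝓝[≠] (0:ℝ), IsUnit (slope c 0 t) :=
      hslope.eventually (Units.isOpen.eventually_mem hunit)
    have hevU : ∀ᶠ t in 𝓝 (0:ℝ), u + t • h ∈ U := by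
      have hlc : ContinuousAt (fun t : ℝ => u + t • h) 0 :=
        (continuous_const.add (continuous_id.smul continuous_const)).continuousAt
      have := hlc.eventually_mem (by simpa using hU.mem_nhds hu)
      simpa using this
    have hevne : ∀ᶠ t in 𝓝[≠] (0:ℝ), t ≠ 0 := by
      exact eventually_mem_nhdsWithin.mono (fun t ht => ht)
    obtain ⟨t, ⟨h1, h2⟩, h3⟩ := ((hev.and (hevU.filter_mono nhdsWithin_le_nhds)).and hevne).exists
    set v : Fin n → ℝ := u + t • h with hvdef
    have hvu : v ≠ u := by
      intro hcontra
      have h4 : t • h = 0 := by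
        have h5 := congrArg (fun z => z - u) hcontra
        simpa [hvdef] using h5
      rcases smul_eq_zero.mp h4 with h' | h'
      · exact h3 h'
      · exact hh0 h'
    have hsl : slope c 0 t = t⁻¹ • (c t - c 0) := by
      rw [slope_def_module]
      simp
    have hsurj : Function.Surjective (c t - c 0) := by
      intro z
      obtain ⟨x, hx⟩ := (bijective_of_isUnit h1).2 (t⁻¹ • z)
      refine ⟨x, ?_⟩
      rw [hsl] at hx
      have hx2 : t⁻¹ • ((c t - c 0) x) = t⁻¹ • z := by
        simpa using hx
      have hx3 := congrArg (fun y => t • y) hx2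
      simpa [smul_smul, mul_inv_cancel₀ h3] using hx3
    obtain ⟨x, hx⟩ := hsurj ((A v v - f v) - (A u u - f u))
    refine hcon v h2 u hu hvu x ?_
    have h10 : c t - c 0 = A v - A u := by
      simp [hcdef, hvdef]
    rw [h10] at hx
    exact hx
  · -- all second derivatives singular: use non-injectivity of b
    push_neg at hcaseA
    obtain ⟨c₀, hc₀⟩ := hne
    set b : (Fin n → ℝ) → (Fin n → ℝ) := fun u => A u u - f u with hbdef
    have hb : ContDiffOn ℝ 1 b U := by
      apply ContDiffOn.sub
      · exact hA.clm_apply contDiffOn_id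
      · exact hf.of_le one_le_two
    have hbd : ∀ u ∈ U, HasFDerivAt b ((fderiv ℝ A u).flip u) u := by
      intro u hu
      have h1 : HasFDerivAt (fun y => A y y)
          ((A u).comp (ContinuousLinearMap.id ℝ _) + (fderiv ℝ A u).flip u) u :=
        (hdA u hu).clm_apply (hasFDerivAt_id u)
      have h2 := h1.sub (hdf u hu)
      have h3 : (A u).comp (ContinuousLinearMap.id ℝ _) + (fderiv ℝ A u).flip u - A u
          = (fderiv ℝ A u).flip u := by
        ext y
        simp
      rwa [h3] at h2
    have hsing : ∀ u ∈ U, ¬ Function.Bijective (fderiv ℝ b u) := by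
      intro u hu hbij
      have h1 : fderiv ℝ b u = (fderiv ℝ A u).flip u := (hbd u hu).fderiv
      have h2 : ⇑(fderiv ℝ b u) = ⇑(fderiv ℝ A u u) := by
        funext y
        rw [h1]
        exact hsymm u hu y u
      rw [h2] at hbij
      exact hcaseA u hu u hbij
    obtain ⟨a, ha, b', hb', hab, heq⟩ := exists_eq_of_fderiv_singular hU hc₀ hb hsing
    refine absurd ?_ (hcon a ha b' hb' hab 0)
    have h4 : A a a - f a = A b' b' - f b' := heq
    show (A a - A b') 0 = (A a a - f a) - (A b' b' - f b')
    rw [h4, sub_self]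
    simp
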